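/- arXiv:2007.12040 — 2 statements merged into one kernel-verified Lean document; each statement's English description precedes it below -/
import Mathlib

section
/- For every ε ∈ (−1,1) and every real z with |z| < 1, the generating function of the return probabilities satisfies the exact identity (Σ_{n≥0} P_n z^n) · (Σ_{n≥0} (ε/2)_n ((ε+1)/2)_n / (n!)² · z^{2n}) = Σ_{n≥0} ((ε+2)/2)_n ((ε+1)/2)_n / (n!)² · z^{2n}; equivalently, Σ_{n≥0} P_n z^n = ₂F₁(ε/2+1, ε/2+1/2; 1; z²) / ₂F₁(ε/2, ε/2+1/2; 1; z²). -/
/-- Probability of a right step in the Gillis walk. -/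
noncomputable def gR (ε : ℝ) (j : ℤ) : ℝ :=
  if j = 0 then 1 / 2 else (1 - ε / (j : ℝ)) / 2

/-- Probability of a left step in the Gillis walk. -/
noncomputable def gL (ε : ℝ) (j : ℤ) : ℝ :=
  if j = 0 then 1 / 2 else (1 + ε / (j : ℝ)) / 2

/-- Occupation probabilities of the Gillis walk started at the origin:
`gP ε n j` is the probability of being at site `j` after `n` steps. -/
noncomputable def gP (ε : ℝ) : ℕ → ℤ → ℝ
  | 0, j => if j = 0 then 1 else 0
  | n + 1, j => gR ε (j - 1) * gP ε n (j - 1) + gL ε (j + 1) * gP ε n (j + 1)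

/-- Pochhammer symbol `(x)ₙ = x (x+1) ⋯ (x+n-1)`. -/
noncomputable def poch (x : ℝ) (n : ℕ) : ℝ := ∏ i ∈ Finset.range n, (x + i)

lemma poch_zero (x : ℝ) : poch x 0 = 1 := by simp [poch]

lemma poch_succ (x : ℝ) (n : ℕ) : poch x (n + 1) = poch x n * (x + n) := by
  simp [poch, Finset.prod_range_succ]

lemma poch_succ_left (x : ℝ) (n : ℕ) : poch x (n + 1) = x * poch (x + 1) n := by
  induction n with
  | zero => simp [poch]
  | succ n ih =>
      rw [poch_succ, ih, poch_succ]
      push_cast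
      ring

lemma poch_two_mul (x : ℝ) (n : ℕ) :
    poch x (2 * n) = 4 ^ n * poch (x / 2) n * poch ((x + 1) / 2) n := by
  induction n with
  | zero => simp [poch]
  | succ n ih =>
      have h : 2 * (n + 1) = (2 * n + 1) + 1 := by ring
      rw [h, poch_succ, poch_succ, ih, poch_succ, poch_succ]
      push_cast
      ring

lemma poch_nonneg {x : ℝ} (hx : 0 ≤ x) (n : ℕ) : 0 ≤ poch x n := by
  apply Finset.prod_nonneg
  intro i _
  positivity

lemma poch_le_poch {x y : ℝ} (hx : 0 ≤ x) (hxy : x ≤ y) (n : ℕ) : poch x n ≤ poch y n := by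
  apply Finset.prod_le_prod
  · intro i _; positivity
  · intro i _; linarith

lemma poch_two (n : ℕ) : poch 2 n = (n + 1).factorial := by
  induction n with
  | zero => simp [poch]
  | succ n ih =>
      rw [poch_succ, ih]
      push_cast [Nat.factorial_succ]
      ring

/-- coefficient of `z^(j+2q)` in the auxiliary series `ψ_j`. -/
noncomputable def psc (ε : ℝ) (j q : ℕ) : ℝ :=
  poch (1 + ε) (j + 2 * q) / (2 ^ (j + 2 * q) * (j + q).factorial * q.factorial)

lemma psc_nonneg {ε : ℝ} (hε : -1 < ε) (j q : ℕ) : 0 ≤ psc ε j q := by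
  have h1 : 0 ≤ poch (1 + ε) (j + 2 * q) := poch_nonneg (by linarith) _
  have h2 : (0:ℝ) < 2 ^ (j + 2 * q) * (j + q).factorial * q.factorial := by positivity
  exact div_nonneg h1 h2.le

lemma choose_le_two_pow (m q : ℕ) : m.choose q ≤ 2 ^ m := by
  rcases le_or_gt q m with h | h
  · calc m.choose q ≤ ∑ k ∈ Finset.range (m + 1), m.choose k :=
        Finset.single_le_sum (fun k _ => Nat.zero_le _) (Finset.mem_range.mpr (by omega))
      _ = 2 ^ m := Nat.sum_range_choose m
  · rw [Nat.choose_eq_zero_of_lt h]; positivity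

lemma psc_le {ε : ℝ} (hε : -1 < ε) (hε' : ε < 1) (j q : ℕ) :
    psc ε j q ≤ 2 * (j + 1) * (q + 1) := by
  have m := j + 2 * q
  have h1 : poch (1 + ε) (j + 2 * q) ≤ ((j + 2 * q + 1).factorial : ℝ) := by
    calc poch (1 + ε) (j + 2 * q) ≤ poch 2 (j + 2 * q) :=
          poch_le_poch (by linarith) (by linarith) _
      _ = ((j + 2 * q + 1).factorial : ℝ) := by rw [poch_two]
  have h2 : (0:ℝ) < 2 ^ (j + 2 * q) * (j + q).factorial * q.factorial := by positivity
  rw [psc, div_le_iff₀ h2]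
  calc poch (1 + ε) (j + 2 * q) ≤ ((j + 2 * q + 1).factorial : ℝ) := h1
    _ ≤ 2 * (j + 1) * (q + 1) * (2 ^ (j + 2 * q) * (j + q).factorial * q.factorial) := by
        have key : (j + 2 * q + 1).factorial ≤
            (2 * (j + 1) * (q + 1)) * (2 ^ (j + 2 * q) * ((j + q).factorial * q.factorial)) := by
          have hch : (j + 2 * q).choose q * q.factorial * (j + q).factorial
              = (j + 2 * q).factorial := by
            have := Nat.choose_mul_factorial_mul_factorial
              (show q ≤ j + 2 * q by omega)
            simpa [show j + 2 * q - q = j + q by omega] using this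
          have hc2 : (j + 2 * q).choose q ≤ 2 ^ (j + 2 * q) := choose_le_two_pow _ _
          calc (j + 2 * q + 1).factorial
              = (j + 2 * q + 1) * (j + 2 * q).factorial := Nat.factorial_succ _
            _ = (j + 2 * q + 1) * ((j + 2 * q).choose q * q.factorial * (j + q).factorial) := by
                rw [hch]
            _ ≤ (2 * (j + 1) * (q + 1)) *
                ((2 ^ (j + 2 * q)) * q.factorial * (j + q).factorial) := by
                apply Nat.mul_le_mul
                · nlinarith
                · exact Nat.mul_le_mul_right _ (Nat.mul_le_mul_right _ hc2)
            _ = (2 * (j + 1) * (q + 1)) * (2 ^ (j + 2 * q) * ((j + q).factorial * q.factorial)) := by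
                ring
        calc ((j + 2 * q + 1).factorial : ℝ)
            ≤ ((2 * (j + 1) * (q + 1)) * (2 ^ (j + 2 * q) * ((j + q).factorial * q.factorial)) : ℕ) := by
              exact_mod_cast Nat.cast_le.mpr key
          _ = 2 * (j + 1) * (q + 1) * (2 ^ (j + 2 * q) * (j + q).factorial * q.factorial) := by
              push_cast; ring

lemma psc_rec0 (ε : ℝ) (j : ℕ) :
    psc ε (j + 1) 0 = (1 / 2) * (1 + ε / (j + 1)) * psc ε j 0 := by
  have hj : ((j:ℝ) + 1) ≠ 0 := by positivity
  simp only [psc, Nat.mul_zero, Nat.add_zero]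
  rw [poch_succ]
  have h1 : ((j + 1).factorial : ℝ) = (j + 1) * j.factorial := by
    push_cast [Nat.factorial_succ]; ring
  rw [h1]
  have h2 : (j.factorial : ℝ) ≠ 0 := Nat.cast_ne_zero.mpr (Nat.factorial_ne_zero j)
  field_simp
  ring

lemma psc_recS (ε : ℝ) (j q : ℕ) :
    psc ε (j + 1) (q + 1) = (1 / 2) * (1 - ε / (j + 1)) * psc ε (j + 2) q
      + (1 / 2) * (1 + ε / (j + 1)) * psc ε j (q + 1) := by
  have hj : ((j:ℝ) + 1) ≠ 0 := by positivity
  simp only [psc]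
  have e1 : j + 1 + 2 * (q + 1) = (j + 2 * q + 2) + 1 := by omega
  have e2 : j + 2 + 2 * q = j + 2 * q + 2 := by omega
  have e3 : j + 2 * (q + 1) = j + 2 * q + 2 := by omega
  have e4 : j + 1 + (q + 1) = j + q + 2 := by omega
  have e5 : j + 2 + q = j + q + 2 := by omega
  have e6 : j + (q + 1) = j + q + 1 := by omega
  rw [e1, e2, e3, e4, e5, e6, poch_succ]
  have hf1 : ((j + q + 2).factorial : ℝ) = (j + q + 2) * (j + q + 1).factorial := by
    push_cast [Nat.factorial_succ]; ring
  have hf2 : ((q + 1).factorial : ℝ) = (q + 1) * q.factorial := by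
    push_cast [Nat.factorial_succ]; ring
  rw [hf1, hf2]
  have h2 : (q.factorial : ℝ) ≠ 0 := Nat.cast_ne_zero.mpr (Nat.factorial_ne_zero q)
  have h3 : ((j + q + 1).factorial : ℝ) ≠ 0 := Nat.cast_ne_zero.mpr (Nat.factorial_ne_zero _)
  have hp : (2:ℝ) ^ (j + 2 * q + 2 + 1) = 2 * 2 ^ (j + 2 * q + 2) := by ring
  rw [hp]
  field_simp
  push_cast
  ring

noncomputable def psi (ε z : ℝ) (j : ℕ) : ℝ := ∑' q : ℕ, psc ε j q * z ^ (j + 2 * q)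

section psi
variable {ε z : ℝ} (hε : -1 < ε) (hε' : ε < 1) (hz : |z| < 1)

lemma summable_aux (hz : |z| < 1) : Summable (fun q : ℕ => 2 * ((q : ℝ) + 1) * (z ^ 2) ^ q) := by
  have hz2 : ‖z ^ 2‖ < 1 := by
    rw [Real.norm_eq_abs, abs_of_nonneg (sq_nonneg z)]
    nlinarith [sq_abs z, abs_nonneg z]
  have h1 := summable_pow_mul_geometric_of_norm_lt_one (R := ℝ) 1 hz2
  have h2 := summable_geometric_of_norm_lt_one hz2
  simp only [pow_one] at h1
  have := (h1.add h2).mul_left 2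
  convert this using 2 with q
  · rfl
  · ring

include hε hε' hz in
lemma psi_summable (j : ℕ) : Summable (fun q : ℕ => psc ε j q * z ^ (j + 2 * q)) := by
  have hg : Summable (fun q : ℕ => (2 * ((j:ℝ) + 1)) * (2 * ((q : ℝ) + 1) * (z ^ 2) ^ q)) :=
    (summable_aux hz).mul_left _
  apply Summable.of_norm
  refine Summable.of_nonneg_of_le (fun q => norm_nonneg _) ?_ hg
  · intro q
    have h0 : 0 ≤ psc ε j q := psc_nonneg hε j q
    rw [Real.norm_eq_abs, abs_mul, abs_of_nonneg h0, abs_pow]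
    have h1 : |z| ^ (j + 2 * q) ≤ (z ^ 2) ^ q := by
      have : |z| ^ (j + 2 * q) = |z| ^ j * ((z^2) ^ q) := by
        rw [pow_add, pow_mul, sq_abs]
      rw [this]
      have hj1 : |z| ^ j ≤ 1 := pow_le_one₀ (abs_nonneg z) hz.le
      have : (0:ℝ) ≤ (z ^ 2) ^ q := by positivity
      nlinarith
    have h2 := psc_le hε hε' j q
    have hp : (0:ℝ) ≤ (z^2)^q := by positivity
    calc psc ε j q * |z| ^ (j + 2 * q) ≤ (2 * ((j:ℝ)+1) * ((q:ℝ)+1)) * (z^2)^q := by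
          apply mul_le_mul h2 h1 (pow_nonneg (abs_nonneg z) _) (by positivity)
      _ = (2 * ((j:ℝ) + 1)) * (2 * ((q : ℝ) + 1) * (z ^ 2) ^ q) / 2 := by ring
      _ ≤ (2 * ((j:ℝ) + 1)) * (2 * ((q : ℝ) + 1) * (z ^ 2) ^ q) := by
          have : (0:ℝ) ≤ (2 * ((j:ℝ) + 1)) * (2 * ((q : ℝ) + 1) * (z ^ 2) ^ q) := by positivity
          linarith

include hε hε' hz in
lemma psi_bound (j : ℕ) :
    |psi ε z j| ≤ ((j:ℝ) + 1) * (2 * ∑' q : ℕ, 2 * ((q : ℝ) + 1) * (z ^ 2) ^ q) := by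
  have hs := psi_summable hε hε' hz (z := z) j
  have h0 : ‖psi ε z j‖ ≤ ∑' q : ℕ, ‖psc ε j q * z ^ (j + 2 * q)‖ :=
    norm_tsum_le_tsum_norm hs.norm
  rw [Real.norm_eq_abs] at h0
  calc |psi ε z j| ≤ ∑' q : ℕ, ‖psc ε j q * z ^ (j + 2 * q)‖ := h0
    _ ≤ ∑' q : ℕ, ((j:ℝ) + 1) * (2 * (2 * ((q : ℝ) + 1) * (z ^ 2) ^ q)) := by
        apply Summable.tsum_le_tsum _ hs.norm (((summable_aux hz).mul_left 2).mul_left _)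
        intro q
        have h0 : 0 ≤ psc ε j q := psc_nonneg hε j q
        rw [Real.norm_eq_abs, abs_mul, abs_of_nonneg h0, abs_pow]
        have h1 : |z| ^ (j + 2 * q) ≤ (z ^ 2) ^ q := by
          have : |z| ^ (j + 2 * q) = |z| ^ j * ((z^2) ^ q) := by
            rw [pow_add, pow_mul, sq_abs]
          rw [this]
          have hj1 : |z| ^ j ≤ 1 := pow_le_one₀ (abs_nonneg z) hz.le
          have : (0:ℝ) ≤ (z ^ 2) ^ q := by positivity
          nlinarith
        have h2 := psc_le hε hε' j q
        calc psc ε j q * |z| ^ (j + 2 * q) ≤ (2 * ((j:ℝ)+1) * ((q:ℝ)+1)) * (z^2)^q :=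
              mul_le_mul h2 h1 (pow_nonneg (abs_nonneg z) _) (by positivity)
          _ ≤ ((j:ℝ) + 1) * (2 * (2 * ((q : ℝ) + 1) * (z ^ 2) ^ q)) := by
              have : (0:ℝ) ≤ (z^2)^q := by positivity
              nlinarith [Nat.cast_nonneg (α := ℝ) q, Nat.cast_nonneg (α := ℝ) j]
    _ = ((j:ℝ) + 1) * (2 * ∑' q : ℕ, 2 * ((q : ℝ) + 1) * (z ^ 2) ^ q) := by
        rw [← tsum_mul_left, ← tsum_mul_left]

include hε hε' hz in
lemma psi_rec (j : ℕ) :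
    psi ε z (j + 1) = (1 / 2) * (1 - ε / ((j:ℝ) + 1)) * z * psi ε z (j + 2)
      + (1 / 2) * (1 + ε / ((j:ℝ) + 1)) * z * psi ε z j := by
  set c1 : ℝ := (1 / 2) * (1 - ε / ((j:ℝ) + 1)) with hc1
  set c2 : ℝ := (1 / 2) * (1 + ε / ((j:ℝ) + 1)) with hc2
  set A : ℕ → ℝ := fun q => c1 * z * (psc ε (j + 2) q * z ^ (j + 2 + 2 * q)) with hA
  set B : ℕ → ℝ := fun q => c2 * z * (psc ε j q * z ^ (j + 2 * q)) with hB
  have hsA : Summable A := ((psi_summable hε hε' hz (j + 2)).mul_left _)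
  have hsB : Summable B := ((psi_summable hε hε' hz j).mul_left _)
  have hmain : psi ε z (j + 1) = (∑' q, A q) + (∑' q, B q) := by
    have hs1 := psi_summable hε hε' hz (z := z) (j + 1)
    rw [psi, Summable.tsum_eq_zero_add hs1]
    have hzero : psc ε (j + 1) 0 * z ^ (j + 1 + 2 * 0) = B 0 := by
      rw [psc_rec0, hB]
      have : j + 1 + 2 * 0 = (j + 2 * 0) + 1 := by omega
      rw [this, pow_succ]
      simp only [hc2]
      ring
    have hsucc : ∀ q : ℕ, psc ε (j + 1) (q + 1) * z ^ (j + 1 + 2 * (q + 1))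
        = A q + B (q + 1) := by
      intro q
      rw [psc_recS]
      rw [show j + 1 + 2 * (q + 1) = (j + 2 + 2 * q) + 1 from by omega]
      rw [pow_succ]
      simp only [hA, hB, hc1, hc2]
      rw [show j + 2 * (q + 1) = j + 2 + 2 * q from by omega]
      ring
    calc psc ε (j + 1) 0 * z ^ (j + 1 + 2 * 0)
          + ∑' q : ℕ, psc ε (j + 1) (q + 1) * z ^ (j + 1 + 2 * (q + 1))
        = B 0 + ∑' q : ℕ, (A q + B (q + 1)) := by
          rw [hzero]
          congr 1
          exact tsum_congr hsucc
      _ = B 0 + ((∑' q, A q) + ∑' q, B (q + 1)) := by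
          rw [Summable.tsum_add hsA ((summable_nat_add_iff 1).mpr hsB)]
      _ = (∑' q, A q) + (B 0 + ∑' q, B (q + 1)) := by ring
      _ = (∑' q, A q) + ∑' q, B q := by
          rw [← Summable.tsum_eq_zero_add hsB]
  rw [hmain, hA, hB, tsum_mul_left, tsum_mul_left, ← psi, ← psi]

end psi

section gPl
variable {ε : ℝ} (hε : -1 < ε) (hε' : ε < 1)

include hε hε' in
lemma gR_nonneg (j : ℤ) : 0 ≤ gR ε j := by
  unfold gR
  split
  · norm_num
  · rename_i hj
    have h1 : (1:ℝ) ≤ |(j:ℝ)| := by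
      rw [← Int.cast_abs]; exact_mod_cast Int.one_le_abs (by omega)
    have h2 : |ε / (j : ℝ)| ≤ |ε| := by
      rw [abs_div]
      calc |ε| / |(j:ℝ)| ≤ |ε| / 1 :=
            div_le_div_of_nonneg_left (abs_nonneg ε) (by norm_num) h1
        _ = |ε| := div_one _
    have h3 : |ε| < 1 := abs_lt.mpr ⟨hε, hε'⟩
    have := abs_le.mp h2
    linarith [this.2]

include hε hε' in
lemma gL_nonneg (j : ℤ) : 0 ≤ gL ε j := by
  unfold gL
  split
  · norm_num
  · rename_i hj
    have h1 : (1:ℝ) ≤ |(j:ℝ)| := by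
      rw [← Int.cast_abs]; exact_mod_cast Int.one_le_abs (by omega)
    have h2 : |ε / (j : ℝ)| ≤ |ε| := by
      rw [abs_div]
      calc |ε| / |(j:ℝ)| ≤ |ε| / 1 :=
            div_le_div_of_nonneg_left (abs_nonneg ε) (by norm_num) h1
        _ = |ε| := div_one _
    have h3 : |ε| < 1 := abs_lt.mpr ⟨hε, hε'⟩
    have := abs_le.mp h2
    linarith [this.1]

lemma gR_add_gL (j : ℤ) : gR ε j + gL ε j = 1 := by
  unfold gR gL
  split
  · norm_num
  · ring

include hε hε' in
lemma gP_nonneg : ∀ (n : ℕ) (j : ℤ), 0 ≤ gP ε n j := by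
  intro n
  induction n with
  | zero => intro j; unfold gP; split <;> norm_num
  | succ n ih =>
      intro j
      show 0 ≤ gR ε (j - 1) * gP ε n (j - 1) + gL ε (j + 1) * gP ε n (j + 1)
      have := gR_nonneg hε hε' (j - 1)
      have := gL_nonneg hε hε' (j + 1)
      have := ih (j - 1)
      have := ih (j + 1)
      positivity

lemma gP_support : ∀ (n : ℕ) (j : ℤ), (n : ℤ) < |j| → gP ε n j = 0 := by
  intro n
  induction n with
  | zero =>
      intro j hj
      unfold gP
      split
      · rename_i h; subst h; simp at hj
      · rfl
  | succ n ih =>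
      intro j hj
      show gR ε (j - 1) * gP ε n (j - 1) + gL ε (j + 1) * gP ε n (j + 1) = 0
      have ha : (n:ℤ) < |j - 1| := by
        have h1 : |j| - |(1:ℤ)| ≤ |j - 1| := abs_sub_abs_le_abs_sub j 1
        push_cast at hj ⊢
        simp at h1
        linarith
      have hb : (n:ℤ) < |j + 1| := by
        have h1 : |j| ≤ |j + 1| + 1 := by
          calc |j| = |j + 1 + (-1)| := by ring_nf
            _ ≤ |j + 1| + |(-1:ℤ)| := abs_add_le _ _
            _ = |j + 1| + 1 := by norm_num
        push_cast at hj ⊢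
        linarith
      rw [ih (j - 1) ha, ih (j + 1) hb]
      ring

lemma sum_Icc_shift (F : ℤ → ℝ) (a b c : ℤ) :
    ∑ j ∈ Finset.Icc (a + c) (b + c), F j = ∑ j ∈ Finset.Icc a b, F (j + c) := by
  rw [← Finset.map_add_right_Icc, Finset.sum_map]
  rfl

lemma gP_shift_key (ε : ℝ) (n : ℕ) (c : ℤ) (hc1 : -1 ≤ c) (hc2 : c ≤ 1) (G : ℤ → ℝ) :
    ∑ j ∈ Finset.Icc (-(n:ℤ) - 1) ((n:ℤ) + 1), G (j + c) * gP ε n (j + c)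
      = ∑ j ∈ Finset.Icc (-(n:ℤ)) (n:ℤ), G j * gP ε n j := by
  rw [← sum_Icc_shift (fun j => G j * gP ε n j) (-(n:ℤ) - 1) ((n:ℤ) + 1) c]
  symm
  apply Finset.sum_subset
  · apply Finset.Icc_subset_Icc <;> omega
  · intro j hj hj2
    simp only [Finset.mem_Icc] at hj hj2
    have h : (n:ℤ) < j ∨ j < -(n:ℤ) := by omega
    have habs : (n:ℤ) < |j| := by
      rcases h with h | h
      · exact lt_of_lt_of_le h (le_abs_self j)
      · linarith [neg_abs_le j]
    rw [gP_support n j habs, mul_zero]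

lemma gP_sum (ε : ℝ) : ∀ n : ℕ, ∑ j ∈ Finset.Icc (-(n:ℤ)) (n:ℤ), gP ε n j = 1 := by
  intro n
  induction n with
  | zero => simp [gP]
  | succ n ih =>
      show ∑ j ∈ Finset.Icc (-(↑(n+1):ℤ)) (↑(n+1):ℤ),
          (gR ε (j - 1) * gP ε n (j - 1) + gL ε (j + 1) * gP ε n (j + 1)) = 1
      have e2 : Finset.Icc (-(↑(n+1):ℤ)) (↑(n+1):ℤ)
          = Finset.Icc (-(n:ℤ) - 1) ((n:ℤ) + 1) := by
        congr 1 <;> push_cast <;> ring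
      rw [e2, Finset.sum_add_distrib]
      have h1 : ∑ j ∈ Finset.Icc (-(n:ℤ) - 1) ((n:ℤ) + 1), gR ε (j - 1) * gP ε n (j - 1)
          = ∑ j ∈ Finset.Icc (-(n:ℤ)) (n:ℤ), gR ε j * gP ε n j := by
        rw [← gP_shift_key ε n (-1) (by norm_num) (by norm_num) (gR ε)]
        apply Finset.sum_congr rfl
        intro j _
        rw [show j - 1 = j + -1 from by ring]
      have h2 : ∑ j ∈ Finset.Icc (-(n:ℤ) - 1) ((n:ℤ) + 1), gL ε (j + 1) * gP ε n (j + 1)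
          = ∑ j ∈ Finset.Icc (-(n:ℤ)) (n:ℤ), gL ε j * gP ε n j :=
        gP_shift_key ε n 1 (by norm_num) (by norm_num) (gL ε)
      rw [h1, h2, ← Finset.sum_add_distrib]
      calc ∑ j ∈ Finset.Icc (-(n:ℤ)) (n:ℤ), (gR ε j * gP ε n j + gL ε j * gP ε n j)
          = ∑ j ∈ Finset.Icc (-(n:ℤ)) (n:ℤ), gP ε n j := by
            apply Finset.sum_congr rfl
            intro j _
            linear_combination gP ε n j * gR_add_gL (ε := ε) j
        _ = 1 := ih

include hε hε' in
lemma gP_le_one (n : ℕ) (j : ℤ) : gP ε n j ≤ 1 := by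
  rcases le_or_gt (|j|) (n : ℤ) with h | h
  · have hmem : j ∈ Finset.Icc (-(n:ℤ)) (n:ℤ) := by
      simp only [Finset.mem_Icc]
      constructor
      · linarith [neg_abs_le j]
      · linarith [le_abs_self j]
    calc gP ε n j ≤ ∑ i ∈ Finset.Icc (-(n:ℤ)) (n:ℤ), gP ε n i :=
          Finset.single_le_sum (fun i _ => gP_nonneg hε hε' n i) hmem
      _ = 1 := gP_sum ε n
  · rw [gP_support n j h]; norm_num

end gPl

section tele
variable {ε z : ℝ} (hε : -1 < ε) (hε' : ε < 1) (hz : |z| < 1)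

include hε hε' hz in
lemma site_id (i : ℤ) (hi : i ≠ 0) :
    gR ε i * (z * psi ε z (i + 1).natAbs) + gL ε i * (z * psi ε z (i - 1).natAbs)
      = psi ε z i.natAbs := by
  rcases hi.lt_or_gt with h | h
  · -- i < 0, i = -(k+1)
    obtain ⟨k, hk⟩ : ∃ k : ℕ, i = -((k:ℤ) + 1) := ⟨(-i - 1).toNat, by omega⟩
    have h1 : (i + 1).natAbs = k := by omega
    have h2 : (i - 1).natAbs = k + 2 := by omega
    have h3 : i.natAbs = k + 1 := by omega
    have hcast : (i : ℝ) = -((k:ℝ) + 1) := by rw [hk]; push_cast; ring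
    have hne : ((k:ℝ) + 1) ≠ 0 := by positivity
    rw [h1, h2, h3, gR, gL, if_neg hi, if_neg hi, hcast, div_neg]
    have := psi_rec hε hε' hz (ε := ε) (z := z) k
    rw [this]
    ring
  · -- i > 0, i = k+1
    obtain ⟨k, hk⟩ : ∃ k : ℕ, i = (k:ℤ) + 1 := ⟨(i - 1).toNat, by omega⟩
    have h1 : (i + 1).natAbs = k + 2 := by omega
    have h2 : (i - 1).natAbs = k := by omega
    have h3 : i.natAbs = k + 1 := by omega
    have hcast : (i : ℝ) = (k:ℝ) + 1 := by rw [hk]; push_cast; ring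
    have hne : ((k:ℝ) + 1) ≠ 0 := by positivity
    rw [h1, h2, h3, gR, gL, if_neg hi, if_neg hi, hcast]
    have := psi_rec hε hε' hz (ε := ε) (z := z) k
    rw [this]
    ring

include hε hε' hz in
lemma S_step (N : ℕ) :
    z ^ (N + 1) * ∑ j ∈ Finset.Icc (-(↑(N+1):ℤ)) (↑(N+1):ℤ), gP ε (N+1) j * psi ε z j.natAbs
      = z ^ N * ∑ j ∈ Finset.Icc (-(N:ℤ)) (N:ℤ), gP ε N j * psi ε z j.natAbs
        - gP ε N 0 * z ^ N * (psi ε z 0 - z * psi ε z 1) := by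
  have e2 : Finset.Icc (-(↑(N+1):ℤ)) (↑(N+1):ℤ) = Finset.Icc (-(N:ℤ) - 1) ((N:ℤ) + 1) := by
    congr 1 <;> push_cast <;> ring
  have hsplit : ∑ j ∈ Finset.Icc (-(↑(N+1):ℤ)) (↑(N+1):ℤ), gP ε (N+1) j * psi ε z j.natAbs
      = ∑ j ∈ Finset.Icc (-(N:ℤ)) (N:ℤ),
          (gR ε j * psi ε z (j+1).natAbs + gL ε j * psi ε z (j-1).natAbs) * gP ε N j := by
    rw [e2]
    have expand : ∀ j : ℤ, gP ε (N+1) j * psi ε z j.natAbs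
        = (fun i => gR ε i * psi ε z (i+1).natAbs) (j + -1) * gP ε N (j + -1)
          + (fun i => gL ε i * psi ε z (i-1).natAbs) (j + 1) * gP ε N (j + 1) := by
      intro j
      show (gR ε (j-1) * gP ε N (j-1) + gL ε (j+1) * gP ε N (j+1)) * psi ε z j.natAbs = _
      simp only []
      rw [show j + -1 = j - 1 from by ring]
      rw [show j - 1 + 1 = j from by ring, show j + 1 - 1 = j from by ring]
      ring
    rw [Finset.sum_congr rfl (fun j _ => expand j), Finset.sum_add_distrib,
      gP_shift_key ε N (-1) (by norm_num) (by norm_num)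
        (fun i => gR ε i * psi ε z (i+1).natAbs),
      gP_shift_key ε N 1 (by norm_num) (by norm_num)
        (fun i => gL ε i * psi ε z (i-1).natAbs),
      ← Finset.sum_add_distrib]
    apply Finset.sum_congr rfl
    intro j _
    ring
  rw [hsplit]
  have h0 : (0:ℤ) ∈ Finset.Icc (-(N:ℤ)) (N:ℤ) := by simp
  set f : ℤ → ℝ := fun j =>
    (gR ε j * psi ε z (j+1).natAbs + gL ε j * psi ε z (j-1).natAbs) * gP ε N j with hf
  set g : ℤ → ℝ := fun j => gP ε N j * psi ε z j.natAbs with hg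
  have herase : ∑ j ∈ (Finset.Icc (-(N:ℤ)) (N:ℤ)).erase 0, (z * f j)
      = ∑ j ∈ (Finset.Icc (-(N:ℤ)) (N:ℤ)).erase 0, g j := by
    apply Finset.sum_congr rfl
    intro j hj
    have hj0 : j ≠ 0 := Finset.ne_of_mem_erase hj
    rw [hf, hg]
    simp only []
    have := site_id hε hε' hz j hj0
    calc z * ((gR ε j * psi ε z (j+1).natAbs + gL ε j * psi ε z (j-1).natAbs) * gP ε N j)
        = (gR ε j * (z * psi ε z (j+1).natAbs) + gL ε j * (z * psi ε z (j-1).natAbs))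
            * gP ε N j := by ring
      _ = psi ε z j.natAbs * gP ε N j := by rw [this]
      _ = gP ε N j * psi ε z j.natAbs := by ring
  have hf0 : z * f 0 = gP ε N 0 * (z * psi ε z 1) := by
    rw [hf]
    simp only []
    rw [gR, gL]
    norm_num
    ring
  have hg0 : g 0 = gP ε N 0 * psi ε z 0 := by simp [hg]
  calc z ^ (N+1) * ∑ j ∈ Finset.Icc (-(N:ℤ)) (N:ℤ), f j
      = z ^ N * ∑ j ∈ Finset.Icc (-(N:ℤ)) (N:ℤ), (z * f j) := by
        rw [Finset.mul_sum, Finset.mul_sum, pow_succ]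
        apply Finset.sum_congr rfl
        intro j _
        ring
    _ = z ^ N * ((z * f 0) + ∑ j ∈ (Finset.Icc (-(N:ℤ)) (N:ℤ)).erase 0, (z * f j)) := by
        rw [Finset.add_sum_erase (Finset.Icc (-(N:ℤ)) (N:ℤ)) (fun j => z * f j) h0]
    _ = z ^ N * ((z * f 0) + ∑ j ∈ (Finset.Icc (-(N:ℤ)) (N:ℤ)).erase 0, g j) := by
        rw [herase]
    _ = z ^ N * ((z * f 0) - g 0 + ∑ j ∈ Finset.Icc (-(N:ℤ)) (N:ℤ), g j) := by
        rw [← Finset.add_sum_erase _ g h0]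
        ring
    _ = z ^ N * ∑ j ∈ Finset.Icc (-(N:ℤ)) (N:ℤ), g j
        - gP ε N 0 * z ^ N * (psi ε z 0 - z * psi ε z 1) := by
        rw [hf0, hg0]
        ring

include hε hε' hz in
lemma S_closed (N : ℕ) :
    z ^ N * ∑ j ∈ Finset.Icc (-(N:ℤ)) (N:ℤ), gP ε N j * psi ε z j.natAbs
      = psi ε z 0 - (∑ n ∈ Finset.range N, gP ε n 0 * z ^ n) * (psi ε z 0 - z * psi ε z 1) := by
  induction N with
  | zero => simp [gP]
  | succ N ih =>
      rw [S_step hε hε' hz N, ih, Finset.sum_range_succ]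
      ring
end tele

section fin
variable {ε z : ℝ} (hε : -1 < ε) (hε' : ε < 1) (hz : |z| < 1)

include hε hε' hz in
lemma G_summable : Summable (fun n : ℕ => gP ε n 0 * z ^ n) := by
  apply Summable.of_norm
  refine Summable.of_nonneg_of_le (fun n => norm_nonneg _) ?_
    (summable_geometric_of_lt_one (abs_nonneg z) hz)
  intro n
  rw [Real.norm_eq_abs, abs_mul, abs_pow]
  have h1 : |gP ε n 0| ≤ 1 := by
    rw [abs_of_nonneg (gP_nonneg hε hε' n 0)]
    exact gP_le_one hε hε' n 0
  have h2 : (0:ℝ) ≤ |z| ^ n := by positivity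
  nlinarith

include hε hε' hz in
lemma S_tendsto_zero :
    Filter.Tendsto (fun N : ℕ =>
      z ^ N * ∑ j ∈ Finset.Icc (-(N:ℤ)) (N:ℤ), gP ε N j * psi ε z j.natAbs)
      Filter.atTop (nhds 0) := by
  set B : ℝ := 2 * ∑' q : ℕ, 2 * ((q : ℝ) + 1) * (z ^ 2) ^ q with hB
  have hB0 : 0 ≤ B := by
    rw [hB]
    have : 0 ≤ ∑' q : ℕ, 2 * ((q : ℝ) + 1) * (z ^ 2) ^ q :=
      tsum_nonneg fun q => by positivity
    linarith
  apply squeeze_zero_norm (a := fun N : ℕ => ((N:ℝ) + 1) * B * |z| ^ N)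
  · intro N
    rw [Real.norm_eq_abs, abs_mul, abs_pow]
    have hsum : |∑ j ∈ Finset.Icc (-(N:ℤ)) (N:ℤ), gP ε N j * psi ε z j.natAbs|
        ≤ ((N:ℝ) + 1) * B := by
      calc |∑ j ∈ Finset.Icc (-(N:ℤ)) (N:ℤ), gP ε N j * psi ε z j.natAbs|
          ≤ ∑ j ∈ Finset.Icc (-(N:ℤ)) (N:ℤ), |gP ε N j * psi ε z j.natAbs| :=
            Finset.abs_sum_le_sum_abs _ _
        _ ≤ ∑ j ∈ Finset.Icc (-(N:ℤ)) (N:ℤ), gP ε N j * (((N:ℝ) + 1) * B) := by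
            apply Finset.sum_le_sum
            intro j hj
            rw [abs_mul, abs_of_nonneg (gP_nonneg hε hε' N j)]
            apply mul_le_mul_of_nonneg_left _ (gP_nonneg hε hε' N j)
            calc |psi ε z j.natAbs| ≤ ((j.natAbs : ℝ) + 1) * B := psi_bound hε hε' hz _
              _ ≤ ((N:ℝ) + 1) * B := by
                  apply mul_le_mul_of_nonneg_right _ hB0
                  have : j.natAbs ≤ N := by
                    simp only [Finset.mem_Icc] at hj
                    omega
                  have := Nat.cast_le (α := ℝ) |>.mpr this
                  linarith
        _ = ((N:ℝ) + 1) * B := by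
            rw [← Finset.sum_mul, gP_sum ε N, one_mul]
    calc |z| ^ N * |∑ j ∈ Finset.Icc (-(N:ℤ)) (N:ℤ), gP ε N j * psi ε z j.natAbs|
        ≤ |z| ^ N * (((N:ℝ) + 1) * B) :=
          mul_le_mul_of_nonneg_left hsum (by positivity)
      _ = ((N:ℝ) + 1) * B * |z| ^ N := by ring
  · have h1 : Filter.Tendsto (fun N : ℕ => ((N:ℝ) ^ 1) * |z| ^ N) Filter.atTop (nhds 0) :=
      tendsto_pow_const_mul_const_pow_of_abs_lt_one 1 (by rwa [abs_abs])
    have h2 : Filter.Tendsto (fun N : ℕ => |z| ^ N) Filter.atTop (nhds 0) :=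
      tendsto_pow_atTop_nhds_zero_of_lt_one (abs_nonneg z) hz
    have h3 := (h1.add h2).mul_const B
    have heq : (fun N : ℕ => ((N:ℝ) + 1) * B * |z| ^ N)
        = fun N : ℕ => ((N:ℝ) ^ 1 * |z| ^ N + |z| ^ N) * B := funext fun N => by ring
    rw [heq]
    simpa using h3

include hε hε' hz in
lemma main_identity :
    (∑' n : ℕ, gP ε n 0 * z ^ n) * (psi ε z 0 - z * psi ε z 1) = psi ε z 0 := by
  have hG := G_summable hε hε' hz
  have hptl : Filter.Tendsto (fun N : ℕ => ∑ n ∈ Finset.range N, gP ε n 0 * z ^ n)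
      Filter.atTop (nhds (∑' n : ℕ, gP ε n 0 * z ^ n)) := hG.hasSum.tendsto_sum_nat
  have hseq : Filter.Tendsto (fun N : ℕ =>
      psi ε z 0 - (∑ n ∈ Finset.range N, gP ε n 0 * z ^ n) * (psi ε z 0 - z * psi ε z 1))
      Filter.atTop
      (nhds (psi ε z 0 - (∑' n : ℕ, gP ε n 0 * z ^ n) * (psi ε z 0 - z * psi ε z 1))) :=
    Filter.Tendsto.const_sub _ (hptl.mul_const _)
  have hseq2 : Filter.Tendsto (fun N : ℕ =>
      psi ε z 0 - (∑ n ∈ Finset.range N, gP ε n 0 * z ^ n) * (psi ε z 0 - z * psi ε z 1))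
      Filter.atTop (nhds 0) := by
    have := S_tendsto_zero hε hε' hz
    apply this.congr
    intro N
    exact S_closed hε hε' hz N
  have := tendsto_nhds_unique hseq hseq2
  linarith

lemma psc_zero_eq (ε : ℝ) (n : ℕ) :
    psc ε 0 n = poch ((ε + 2) / 2) n * poch ((ε + 1) / 2) n / ((n.factorial : ℝ)) ^ 2 := by
  have h1 : psc ε 0 n = poch (1 + ε) (2 * n) / (2 ^ (2 * n) * n.factorial * n.factorial) := by
    rw [psc]
    norm_num
  rw [h1, poch_two_mul]
  have e1 : (1 + ε) / 2 = (ε + 1) / 2 := by ring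
  have e2 : (1 + ε + 1) / 2 = (ε + 2) / 2 := by ring
  rw [e1, e2]
  have h4 : (2:ℝ) ^ (2 * n) = 4 ^ n := by
    rw [pow_mul]; norm_num
  rw [h4]
  have hf : ((n.factorial : ℝ)) ≠ 0 := Nat.cast_ne_zero.mpr (Nat.factorial_ne_zero n)
  have h40 : (4:ℝ) ^ n ≠ 0 := by positivity
  field_simp

lemma ccoef (ε : ℝ) (m : ℕ) :
    poch (ε / 2) (m + 1) * poch ((ε + 1) / 2) (m + 1) / (((m+1).factorial : ℝ)) ^ 2
      = psc ε 0 (m + 1) - psc ε 1 m := by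
  have hdup : poch ε (2 * (m + 1)) = 4 ^ (m+1) * poch (ε / 2) (m+1) * poch ((ε + 1) / 2) (m+1) :=
    poch_two_mul ε (m+1)
  have he : poch ε (2 * (m + 1)) = ε * poch (1 + ε) (2 * m + 1) := by
    rw [show 2 * (m + 1) = (2 * m + 1) + 1 from by omega, poch_succ_left,
      show ε + 1 = 1 + ε from by ring]
  have hs : poch (1 + ε) (2 * m + 2) = poch (1 + ε) (2 * m + 1) * (1 + ε + (2 * m + 1 : ℕ)) := by
    rw [show 2 * m + 2 = (2 * m + 1) + 1 from by omega, poch_succ]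
  have h0 : psc ε 0 (m + 1)
      = poch (1 + ε) (2 * m + 2) / (2 ^ (2 * m + 2) * (m+1).factorial * (m+1).factorial) := by
    rw [psc]
    norm_num
    rw [show 2 * (m + 1) = 2 * m + 2 from by omega]
  have h1 : psc ε 1 m
      = poch (1 + ε) (2 * m + 1) / (2 ^ (2 * m + 1) * (m+1).factorial * m.factorial) := by
    rw [psc]
    rw [show 1 + 2 * m = 2 * m + 1 from by omega, show 1 + m = m + 1 from by omega]
  rw [h0, h1, hs]
  have hfact : (((m+1).factorial : ℝ)) = ((m:ℝ) + 1) * m.factorial := by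
    push_cast [Nat.factorial_succ]; ring
  have key : poch (ε / 2) (m+1) * poch ((ε + 1) / 2) (m+1)
      = ε * poch (1 + ε) (2 * m + 1) / 4 ^ (m+1) := by
    have h4 : (4:ℝ) ^ (m+1) ≠ 0 := by positivity
    rw [← he]
    field_simp [hdup]
    linarith [hdup]
  rw [key, hfact]
  have hf : ((m.factorial : ℝ)) ≠ 0 := Nat.cast_ne_zero.mpr (Nat.factorial_ne_zero m)
  have hm1 : ((m:ℝ) + 1) ≠ 0 := by positivity
  have h2a : (2:ℝ) ^ (2 * m + 1) ≠ 0 := by positivity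
  have h2b : (2:ℝ) ^ (2 * m + 2) = 2 * 2 ^ (2 * m + 1) := by ring
  have h4b : (4:ℝ) ^ (m + 1) = 2 * 2 ^ (2 * m + 1) := by
    rw [show (4:ℝ) = 2 ^ 2 from by norm_num, ← pow_mul]
    rw [show 2 * (m + 1) = (2 * m + 1) + 1 from by omega, pow_succ]
    ring
  rw [h2b, h4b]
  push_cast
  field_simp
  ring

end fin

/-- The generating function of the return probabilities of the Gillis random walk equals
`₂F₁(ε/2+1, ε/2+1/2; 1; z²) / ₂F₁(ε/2, ε/2+1/2; 1; z²)`, stated multiplicatively. -/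
theorem gillis_generating_function (ε : ℝ) (hε : ε ∈ Set.Ioo (-1 : ℝ) 1)
    (z : ℝ) (hz : |z| < 1) :
    (∑' n : ℕ, gP ε n 0 * z ^ n) *
      (∑' n : ℕ, poch (ε / 2) n * poch ((ε + 1) / 2) n / ((n.factorial : ℝ)) ^ 2 * z ^ (2 * n)) =
    ∑' n : ℕ, poch ((ε + 2) / 2) n * poch ((ε + 1) / 2) n / ((n.factorial : ℝ)) ^ 2 * z ^ (2 * n) := by
  obtain ⟨hε1, hε2⟩ := hε
  have hD : (∑' n : ℕ, poch ((ε + 2) / 2) n * poch ((ε + 1) / 2) n / ((n.factorial : ℝ)) ^ 2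
      * z ^ (2 * n)) = psi ε z 0 := by
    rw [psi]
    apply tsum_congr
    intro n
    rw [psc_zero_eq]
    norm_num
  have hD0 : HasSum (fun n : ℕ => psc ε 0 n * z ^ (0 + 2 * n)) (psi ε z 0) :=
    (psi_summable hε1 hε2 hz 0).hasSum
  have hZ1 : HasSum (fun q : ℕ => psc ε 1 q * z ^ (2 * (q + 1))) (z * psi ε z 1) := by
    have h := ((psi_summable hε1 hε2 hz 1).hasSum).mul_left z
    have heq : (fun q : ℕ => psc ε 1 q * z ^ (2 * (q + 1)))
        = fun q : ℕ => z * (psc ε 1 q * z ^ (1 + 2 * q)) := by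
      funext q
      rw [show 2 * (q + 1) = (1 + 2 * q) + 1 from by omega, pow_succ]
      ring
    rw [heq]
    exact h
  set f : ℕ → ℝ := fun n => if n = 0 then 0 else psc ε 1 (n - 1) * z ^ (2 * n) with hfdef
  have hf1 : (fun n => f (n + 1)) = fun q : ℕ => psc ε 1 q * z ^ (2 * (q + 1)) := by
    funext q
    simp [hfdef]
  have hF : HasSum f (z * psi ε z 1) := by
    have h2 := (hasSum_nat_add_iff (f := f) 1).mp (by rw [hf1]; exact hZ1)
    simpa [hfdef] using h2
  have hC0 : HasSum (fun n : ℕ => psc ε 0 n * z ^ (0 + 2 * n) - f n)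
      (psi ε z 0 - z * psi ε z 1) := hD0.sub hF
  have hC1 : (fun n : ℕ => psc ε 0 n * z ^ (0 + 2 * n) - f n)
      = fun n : ℕ => poch (ε / 2) n * poch ((ε + 1) / 2) n / ((n.factorial : ℝ)) ^ 2
        * z ^ (2 * n) := by
    funext n
    cases n with
    | zero => simp [hfdef, psc, poch]
    | succ m =>
        simp only [hfdef]
        rw [if_neg (Nat.succ_ne_zero m)]
        rw [show m + 1 - 1 = m from rfl, show 0 + 2 * (m + 1) = 2 * (m + 1) from by omega]
        rw [show poch (ε / 2) (m + 1) * poch ((ε + 1) / 2) (m + 1)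
            / (((m+1).factorial : ℝ)) ^ 2 = psc ε 0 (m + 1) - psc ε 1 m from ccoef ε m]
        ring
  rw [hC1] at hC0
  rw [hD, hC0.tsum_eq]
  exact main_identity hε1 hε2 hz
end

section
/- The return probability R = Σ_{n≥1} F_n of the Gillis random walk satisfies: R = 1/|ε| − 1 if −1 < ε < −1/2, and R = 1 if −1/2 ≤ ε < 1. In particular, the walk is transient for −1 < ε < −1/2 and recurrent for −1/2 ≤ ε < 1. -/
open Filter

open Finset Topology

namespace Gillis

noncomputable def W (ε : ℝ) : ℕ → ℤ → ℝ
  | 0, j => if j = 0 then 1 else 0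
  | n+1, j => if j = 0 then 0 else gR ε (j-1) * W ε n (j-1) + gL ε (j+1) * W ε n (j+1)

noncomputable def Fc (ε : ℝ) : ℕ → ℝ
  | 0 => 0
  | n+1 => (1+ε) * W ε n 1

variable {ε : ℝ}

lemma gR_add_gL (j : ℤ) : gR ε j + gL ε j = 1 := by
  unfold gR gL; split <;> ring

lemma gR_nonneg (h1 : -1 < ε) (h2 : ε < 1) (j : ℤ) : 0 ≤ gR ε j := by
  unfold gR; split
  · norm_num
  · rename_i hj
    have hj1 : (1:ℝ) ≤ |(j:ℝ)| := by
      rw [← Int.cast_abs]; exact_mod_cast Int.one_le_abs (by simpa using hj)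
    have : |ε / (j:ℝ)| ≤ |ε| := by
      rw [abs_div]
      calc |ε| / |(j:ℝ)| ≤ |ε| / 1 := by
            apply div_le_div_of_nonneg_left (abs_nonneg ε) one_pos hj1
        _ = |ε| := by ring
    have hε : |ε| < 1 := abs_lt.2 ⟨h1, h2⟩
    have := (abs_le.1 this).2
    nlinarith

lemma gL_nonneg (h1 : -1 < ε) (h2 : ε < 1) (j : ℤ) : 0 ≤ gL ε j := by
  unfold gL; split
  · norm_num
  · rename_i hj
    have hj1 : (1:ℝ) ≤ |(j:ℝ)| := by
      rw [← Int.cast_abs]; exact_mod_cast Int.one_le_abs (by simpa using hj)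
    have : |ε / (j:ℝ)| ≤ |ε| := by
      rw [abs_div]
      calc |ε| / |(j:ℝ)| ≤ |ε| / 1 := by
            apply div_le_div_of_nonneg_left (abs_nonneg ε) one_pos hj1
        _ = |ε| := by ring
    have hε : |ε| < 1 := abs_lt.2 ⟨h1, h2⟩
    have := (abs_le.1 this).1
    nlinarith

lemma gR_neg (j : ℤ) : gR ε (-j) = gL ε j := by
  unfold gR gL
  rcases eq_or_ne j 0 with h | h
  · simp [h]
  · rw [if_neg (by simpa using h), if_neg h]
    push_cast
    rw [div_neg]
    ring

lemma gL_neg (j : ℤ) : gL ε (-j) = gR ε j := by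
  have := gR_neg (ε := ε) (-j); simpa using this.symm

lemma W_zero {n : ℕ} (hn : n ≠ 0) : W ε n 0 = 0 := by
  obtain ⟨m, rfl⟩ := Nat.exists_eq_succ_of_ne_zero hn
  simp [W]

lemma W_nonneg (h1 : -1 < ε) (h2 : ε < 1) : ∀ n j, 0 ≤ W ε n j := by
  intro n
  induction n with
  | zero => intro j; simp [W]; positivity
  | succ n ih =>
    intro j
    rw [W]
    split
    · exact le_refl 0
    · exact add_nonneg (mul_nonneg (gR_nonneg h1 h2 _) (ih _))
        (mul_nonneg (gL_nonneg h1 h2 _) (ih _))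

lemma W_symm : ∀ n (j : ℤ), W ε n (-j) = W ε n j := by
  intro n
  induction n with
  | zero => intro j; simp [W, neg_eq_zero]
  | succ n ih =>
    intro j
    show (if -j = 0 then (0:ℝ) else _) = (if j = 0 then (0:ℝ) else _)
    rcases eq_or_ne j 0 with h | h
    · simp [h]
    · rw [if_neg (by simpa using h), if_neg h]
      have e1 : -j - 1 = -(j+1) := by ring
      have e2 : -j + 1 = -(j-1) := by ring
      rw [e1, e2, gR_neg, gL_neg, ih, ih]
      ring

lemma W_eq_zero : ∀ (n : ℕ) (j : ℤ), (n : ℤ) < |j| → W ε n j = 0 := by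
  intro n
  induction n with
  | zero =>
    intro j hj
    have : j ≠ 0 := by intro h; rw [h] at hj; simp at hj
    simp [W, this]
  | succ n ih =>
    intro j hj
    show (if j = 0 then (0:ℝ) else gR ε (j-1) * W ε n (j-1) + gL ε (j+1) * W ε n (j+1)) = 0
    rcases eq_or_ne j 0 with h | h
    · simp [h]
    · have h1 : (n : ℤ) < |j - 1| := by
        have := abs_sub_abs_le_abs_sub j 1
        simp at this; push_cast at hj ⊢; linarith
      have h2 : (n : ℤ) < |j + 1| := by
        have := abs_sub_abs_le_abs_sub j (-1)
        simp at this
        push_cast at hj ⊢; linarith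
      rw [if_neg h, ih (j-1) h1, ih (j+1) h2]
      ring

lemma gL_one : gL ε 1 = (1+ε)/2 := by unfold gL; norm_num

lemma W_succ (n : ℕ) {j : ℤ} (h : j ≠ 0) :
    W ε (n+1) j = gR ε (j-1) * W ε n (j-1) + gL ε (j+1) * W ε n (j+1) := by
  show (if j = 0 then (0:ℝ) else _) = _
  rw [if_neg h]

lemma gP_succ (n : ℕ) (j : ℤ) :
    gP ε (n+1) j = gR ε (j-1) * gP ε n (j-1) + gL ε (j+1) * gP ε n (j+1) := rfl

lemma Wstep_eq (n : ℕ) (j : ℤ) :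
    gR ε (j-1) * W ε n (j-1) + gL ε (j+1) * W ε n (j+1)
      = W ε (n+1) j + (if j = 0 then Fc ε (n+1) else 0) := by
  rcases eq_or_ne j 0 with h | h
  · subst h
    rw [if_pos rfl, W_zero (Nat.succ_ne_zero n)]
    have e1 : (0:ℤ) - 1 = -1 := by ring
    have e2 : gR ε (-1) = gL ε 1 := gR_neg 1
    have e3 : W ε n (-1) = W ε n 1 := W_symm n 1
    rw [e1, e2]
    show gL ε 1 * W ε n (0 - 1 + 1 - 1 + 1 - 1) + gL ε (0+1) * W ε n (0+1) = _
    norm_num [e3, gL_one, Fc]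
    ring
  · rw [if_neg h, W_succ n h, add_zero]

lemma gP_decomp : ∀ (n : ℕ) (j : ℤ),
    gP ε n j = W ε n j + ∑ k ∈ Icc 1 n, Fc ε k * gP ε (n-k) j := by
  intro n
  induction n with
  | zero => intro j; simp [gP, W]
  | succ n ih =>
    intro j
    rw [gP_succ, ih (j-1), ih (j+1), Finset.sum_Icc_succ_top (Nat.le_add_left 1 n)]
    have hsum : ∀ k ∈ Icc 1 n, Fc ε k * gP ε (n+1-k) j
        = gR ε (j-1) * (Fc ε k * gP ε (n-k) (j-1))
          + gL ε (j+1) * (Fc ε k * gP ε (n-k) (j+1)) := by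
      intro k hk
      have hk' : k ≤ n := (mem_Icc.1 hk).2
      have hone : n+1-k = (n-k)+1 := by omega
      rw [hone, gP_succ]; ring
    have htop : Fc ε (n+1) * gP ε (n+1-(n+1)) j = (if j = 0 then Fc ε (n+1) else 0) := by
      rcases eq_or_ne j 0 with h|h <;> simp [h, gP, Nat.sub_self]
    rw [Finset.sum_congr rfl hsum, Finset.sum_add_distrib, ← Finset.mul_sum, ← Finset.mul_sum,
      htop]
    have hB := Wstep_eq (ε := ε) n j
    linear_combination hB

lemma F_eq_Fc {F : ℕ → ℝ} (hF0 : F 0 = 0)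
    (hren : ∀ n : ℕ, 1 ≤ n → gP ε n 0 = ∑ k ∈ Finset.Icc 1 n, F k * gP ε (n - k) 0) :
    ∀ n, F n = Fc ε n := by
  intro n
  induction n using Nat.strong_induction_on with
  | _ n ih =>
    match n with
    | 0 => simpa [Fc] using hF0
    | (m+1) =>
      have hd := gP_decomp (ε := ε) (m+1) 0
      rw [W_zero (Nat.succ_ne_zero m)] at hd
      have hr := hren (m+1) (Nat.le_add_left 1 m)
      rw [hd] at hr
      rw [Finset.sum_Icc_succ_top (Nat.le_add_left 1 m),
        Finset.sum_Icc_succ_top (Nat.le_add_left 1 m)] at hr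
      have he : ∀ k ∈ Icc 1 m, F k * gP ε (m+1-k) 0 = Fc ε k * gP ε (m+1-k) 0 := by
        intro k hk
        rw [ih k (by have := (mem_Icc.1 hk).2; omega)]
      rw [Finset.sum_congr rfl he] at hr
      have h00 : gP ε (m+1-(m+1)) 0 = 1 := by simp [gP]
      rw [h00] at hr
      linarith

noncomputable def rho (ε : ℝ) : ℕ → ℝ
  | 0 => 1
  | k+1 => rho ε k * ((k+1+ε)/(k+1-ε))

lemma rho_pos (h1 : -1 < ε) (h2 : ε < 1) : ∀ k, 0 < rho ε k := by
  intro k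
  induction k with
  | zero => norm_num [rho]
  | succ k ih =>
    rw [rho]
    have ha : (0:ℝ) < k+1+ε := by push_cast; linarith
    have hb : (0:ℝ) < k+1-ε := by push_cast; linarith
    positivity

noncomputable def gg (ε : ℝ) (M : ℕ) : ℝ := ∑ k ∈ range M, rho ε k

lemma gg_mono (h1 : -1 < ε) (h2 : ε < 1) : Monotone (gg ε) := by
  apply monotone_nat_of_le_succ
  intro M
  rw [gg, gg, Finset.sum_range_succ]
  have := rho_pos h1 h2 M
  linarith

lemma gg_nonneg (h1 : -1 < ε) (h2 : ε < 1) (M : ℕ) : 0 ≤ gg ε M := by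
  apply Finset.sum_nonneg; intro k _; exact (rho_pos h1 h2 k).le

lemma gg_zero : gg ε 0 = 0 := by simp [gg]

lemma gg_one : gg ε 1 = 1 := by simp [gg, rho]

lemma one_le_gg (h1 : -1 < ε) (h2 : ε < 1) {M : ℕ} (hM : 1 ≤ M) : 1 ≤ gg ε M := by
  calc (1:ℝ) = gg ε 1 := gg_one.symm
    _ ≤ gg ε M := gg_mono h1 h2 hM

lemma ratio_key (h1 : -1 < ε) (h2 : ε < 1) {i : ℕ} (hi : 1 ≤ i) :
    gR ε (i : ℤ) * rho ε i = gL ε (i : ℤ) * rho ε (i-1) := by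
  obtain ⟨m, rfl⟩ := Nat.exists_eq_add_of_le hi
  have e0 : (1 + m) - 1 = m := by omega
  have er : rho ε (1+m) = rho ε m * ((m+1+ε)/(m+1-ε)) := by
    have : 1 + m = m + 1 := by omega
    rw [this, rho]
  have hne : ((1+m : ℕ) : ℤ) ≠ 0 := by exact_mod_cast (by omega : (1+m) ≠ 0)
  rw [e0, er]
  unfold gR gL
  rw [if_neg hne, if_neg hne]
  have hb : (0:ℝ) < m+1-ε := by linarith
  have hc : ((((1+m:ℕ) : ℤ) : ℝ)) = (m:ℝ)+1 := by push_cast; ring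
  rw [hc]
  have hm1 : (0:ℝ) < (m:ℝ)+1 := by positivity
  field_simp

lemma harmonic_gg (h1 : -1 < ε) (h2 : ε < 1) {i : ℕ} (hi : 1 ≤ i) :
    gR ε (i:ℤ) * gg ε (i+1) + gL ε (i:ℤ) * gg ε (i-1) = gg ε i := by
  obtain ⟨m, rfl⟩ := Nat.exists_eq_add_of_le hi
  have e0 : (1 + m) - 1 = m := by omega
  have e1 : gg ε (1+m+1) = gg ε (1+m) + rho ε (1+m) := by
    rw [gg, gg, Finset.sum_range_succ]
  have e2 : gg ε (1+m) = gg ε m + rho ε m := by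
    have h : 1 + m = m + 1 := by omega
    rw [h, gg, gg, Finset.sum_range_succ]
  have hk := ratio_key h1 h2 (i := 1+m) (by omega)
  rw [e0] at hk
  have hRL := gR_add_gL (ε := ε) ((1+m : ℕ) : ℤ)
  rw [e0, e1, e2]
  linear_combination hk + (gg ε m) * hRL + (rho ε m) * hRL

noncomputable def WS (ε : ℝ) (φ : ℕ → ℝ) (n : ℕ) : ℝ :=
  ∑ j ∈ range (n+1), φ j * W ε n (j : ℤ)

lemma WS_step {n : ℕ} (hn : 1 ≤ n) (φ : ℕ → ℝ)
    (hφ : ∀ i : ℕ, 1 ≤ i → gR ε (i:ℤ) * φ (i+1) + gL ε (i:ℤ) * φ (i-1) = φ i) :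
    WS ε φ (n+1) = WS ε φ n - φ 0 * gL ε 1 * W ε n 1 := by
  have hW0 : W ε n 0 = 0 := W_zero (by omega)
  set f : ℕ → ℝ := fun i => φ (i-1) * gL ε (i:ℤ) * W ε n (i:ℤ) with hf
  have hterm : ∀ i : ℕ, φ (i+1) * W ε (n+1) ((i+1 : ℕ) : ℤ)
      = φ (i+1) * gR ε (i:ℤ) * W ε n (i:ℤ) + f (i+2) := by
    intro i
    have hcast : ((i+1 : ℕ) : ℤ) = (i:ℤ) + 1 := by push_cast; ring
    have hne : ((i:ℤ) + 1) ≠ 0 := by omega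
    rw [hcast, W_succ n hne]
    have c1 : (i:ℤ) + 1 - 1 = (i:ℤ) := by ring
    have c2 : (i:ℤ) + 1 + 1 = ((i+2 : ℕ) : ℤ) := by push_cast; ring
    have c3 : (i+2) - 1 = i+1 := by omega
    rw [c1, c2]
    simp only [hf, c3]
    ring
  have step1 : WS ε φ (n+1) = ∑ i ∈ range (n+1), φ (i+1) * W ε (n+1) ((i+1 : ℕ) : ℤ) := by
    rw [WS, Finset.sum_range_succ']
    simp [W_zero (Nat.succ_ne_zero n)]
  have hT : ∑ i ∈ range (n+1), f (i+2) = ∑ i ∈ range (n+1), f i - f 1 := by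
    have e1 : ∑ i ∈ range (n+3), f i = (∑ j ∈ range (n+2), f (j+1)) + f 0 :=
      Finset.sum_range_succ' f (n+2)
    have e2 : ∑ j ∈ range (n+2), f (j+1) = (∑ j ∈ range (n+1), f (j+2)) + f 1 :=
      Finset.sum_range_succ' (fun j => f (j+1)) (n+1)
    have e3 : ∑ i ∈ range (n+3), f i = ∑ i ∈ range (n+1), f i + f (n+1) + f (n+2) := by
      rw [show n+3 = (n+2)+1 from rfl, Finset.sum_range_succ, Finset.sum_range_succ]
    have z1 : f (n+1) = 0 := by
      have h' : W ε n ((n:ℤ)+1) = 0 := by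
        apply W_eq_zero
        rw [abs_of_nonneg (by positivity)]
        linarith
      simp [hf, h']
    have z2 : f (n+2) = 0 := by
      have h' : W ε n ((n:ℤ)+2) = 0 := by
        apply W_eq_zero
        rw [abs_of_nonneg (by positivity)]
        linarith
      simp [hf, h']
    have z0 : f 0 = 0 := by simp [hf, hW0]
    linarith [e1, e2, e3]
  have hcomb : ∑ i ∈ range (n+1), φ (i+1) * gR ε (i:ℤ) * W ε n (i:ℤ)
      + ∑ i ∈ range (n+1), f i = WS ε φ n := by
    rw [WS, ← Finset.sum_add_distrib]
    apply Finset.sum_congr rfl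
    intro i _
    rcases Nat.eq_zero_or_pos i with h | h
    · subst h; simp [hf, hW0]
    · simp only [hf]
      linear_combination (W ε n (i:ℤ)) * (hφ i h)
  have hf1 : f 1 = φ 0 * gL ε 1 * W ε n 1 := by norm_num [hf]
  rw [step1, Finset.sum_congr rfl (fun i _ => hterm i), Finset.sum_add_distrib, hT]
  linarith [hcomb]

lemma W_zero_one : W ε 0 1 = 0 := by norm_num [W]

lemma W_one_one : W ε 1 1 = 1/2 := by
  rw [show W ε 1 1 = W ε (0+1) 1 from rfl, W_succ 0 (by norm_num : (1:ℤ) ≠ 0)]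
  norm_num [W, gR]

lemma WS_one (φ : ℕ → ℝ) : WS ε φ 1 = φ 1 / 2 := by
  rw [WS]
  rw [Finset.sum_range_succ, Finset.sum_range_succ, Finset.sum_range_zero]
  have h0 : W ε 1 ((0:ℕ):ℤ) = 0 := W_zero one_ne_zero
  have h1 : W ε 1 ((1:ℕ):ℤ) = 1/2 := by exact_mod_cast W_one_one
  rw [h0, h1]
  ring

lemma WS_telescope {N : ℕ} (hN : 1 ≤ N) (φ : ℕ → ℝ)
    (hφ : ∀ i : ℕ, 1 ≤ i → gR ε (i:ℤ) * φ (i+1) + gL ε (i:ℤ) * φ (i-1) = φ i) :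
    WS ε φ N = φ 1 / 2 - φ 0 * gL ε 1 * ∑ n ∈ Ico 1 N, W ε n 1 := by
  induction N with
  | zero => omega
  | succ N ihN =>
    match N, ihN with
    | 0, _ => simp [WS_one]
    | (M+1), ihN =>
      rw [WS_step (Nat.le_add_left 1 M) φ hφ, ihN (Nat.le_add_left 1 M),
        Finset.sum_Ico_succ_top (Nat.le_add_left 1 M)]
      ring

lemma sum_range_W1 (N : ℕ) : ∑ n ∈ range N, W ε n 1 = ∑ n ∈ Ico 1 N, W ε n 1 := by
  rcases Nat.eq_zero_or_pos N with h | h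
  · simp [h]
  · rw [Finset.range_eq_Ico, Finset.sum_eq_sum_Ico_succ_bot h, W_zero_one, zero_add]

lemma sumFc_eq (N : ℕ) :
    ∑ k ∈ range (N+1), Fc ε k = (1+ε) * ∑ n ∈ Ico 1 N, W ε n 1 := by
  rw [Finset.sum_range_succ' (Fc ε) N]
  have : ∀ k, Fc ε (k+1) = (1+ε) * W ε k 1 := fun k => rfl
  simp only [this, Fc]
  rw [← Finset.mul_sum, sum_range_W1]
  ring

lemma harmonic_one : ∀ i : ℕ, 1 ≤ i →
    gR ε (i:ℤ) * (fun _ : ℕ => (1:ℝ)) (i+1) + gL ε (i:ℤ) * (fun _ : ℕ => (1:ℝ)) (i-1)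
      = (fun _ : ℕ => (1:ℝ)) i := by
  intro i _
  simpa using gR_add_gL (ε := ε) (i:ℤ)

lemma WS_one_fun {N : ℕ} (hN : 1 ≤ N) :
    WS ε (fun _ => (1:ℝ)) N = 1/2 - gL ε 1 * ∑ n ∈ Ico 1 N, W ε n 1 := by
  have := WS_telescope (ε := ε) hN (fun _ => (1:ℝ)) harmonic_one
  simpa using this

lemma WS_nonneg (h1 : -1 < ε) (h2 : ε < 1) (φ : ℕ → ℝ) (hφ : ∀ i, 0 ≤ φ i) (N : ℕ) :
    0 ≤ WS ε φ N := by
  apply Finset.sum_nonneg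
  intro j _
  exact mul_nonneg (hφ j) (W_nonneg h1 h2 N j)

lemma sigma_bounded (h1 : -1 < ε) (h2 : ε < 1) (N : ℕ) :
    ∑ n ∈ Ico 1 N, W ε n 1 ≤ 1/(1+ε) := by
  rcases Nat.eq_zero_or_pos N with h | h
  · have h1e : (0:ℝ) < 1+ε := by linarith
    simp [h]
    positivity
  · have hm := WS_nonneg h1 h2 (fun _ => (1:ℝ)) (fun _ => zero_le_one) N
    rw [WS_one_fun h] at hm
    rw [gL_one] at hm
    rw [le_div_iff₀ (by linarith : (0:ℝ) < 1+ε)]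
    linarith

lemma gL_pos (h1 : -1 < ε) (h2 : ε < 1) {i : ℤ} (hi : 1 ≤ i) : 0 < gL ε i := by
  unfold gL
  rw [if_neg (by omega)]
  have hj1 : (1:ℝ) ≤ |(i:ℝ)| := by
    rw [← Int.cast_abs]; exact_mod_cast Int.one_le_abs (by omega)
  have habs : |ε / (i:ℝ)| ≤ |ε| := by
    rw [abs_div]
    calc |ε| / |(i:ℝ)| ≤ |ε| / 1 := by
          apply div_le_div_of_nonneg_left (abs_nonneg ε) one_pos hj1
      _ = |ε| := by ring
  have hε : |ε| < 1 := abs_lt.2 ⟨h1, h2⟩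
  have := (abs_le.1 habs).1
  linarith

lemma summable_W1 (h1 : -1 < ε) (h2 : ε < 1) : Summable (fun n => W ε n 1) := by
  apply summable_of_sum_range_le (fun n => W_nonneg h1 h2 n 1)
  intro N
  rw [sum_range_W1]
  exact sigma_bounded h1 h2 N

lemma summable_Wj (h1 : -1 < ε) (h2 : ε < 1) :
    ∀ j : ℕ, 1 ≤ j → Summable (fun n => W ε n (j:ℤ)) := by
  intro j hj
  induction j, hj using Nat.le_induction with
  | base => exact_mod_cast summable_W1 h1 h2
  | succ j hj ih =>
    have hL : 0 < gL ε ((j:ℤ)+1) := gL_pos h1 h2 (by omega)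
    have hle : ∀ n, W ε n ((j:ℤ)+1) ≤ (gL ε ((j:ℤ)+1))⁻¹ * W ε (n+1) (j:ℤ) := by
      intro n
      have hW := W_succ (ε := ε) n (show (j:ℤ) ≠ 0 by omega)
      have hR : 0 ≤ gR ε ((j:ℤ)-1) * W ε n ((j:ℤ)-1) :=
        mul_nonneg (gR_nonneg h1 h2 _) (W_nonneg h1 h2 _ _)
      rw [inv_mul_eq_div, le_div_iff₀ hL, hW]
      nlinarith [hR]
    have hs : Summable (fun n => (gL ε ((j:ℤ)+1))⁻¹ * W ε (n+1) (j:ℤ)) :=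
      (((summable_nat_add_iff 1).2 ih)).mul_left _
    have hres := Summable.of_nonneg_of_le (fun n => W_nonneg h1 h2 n _) hle hs
    simpa using hres

lemma tendsto_W0 : Tendsto (fun N => W ε N ((0:ℕ):ℤ)) atTop (𝓝 0) := by
  apply tendsto_const_nhds.congr'
  filter_upwards [eventually_ge_atTop 1] with N hN
  exact (W_zero (by omega)).symm

lemma tendsto_Wj (h1 : -1 < ε) (h2 : ε < 1) (j : ℕ) :
    Tendsto (fun N => W ε N (j:ℤ)) atTop (𝓝 0) := by
  rcases Nat.eq_zero_or_pos j with h | h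
  · subst h; exact tendsto_W0
  · exact (summable_Wj h1 h2 j h).tendsto_atTop_zero

lemma tendsto_finpart (h1 : -1 < ε) (h2 : ε < 1) (c : ℕ → ℝ) (M : ℕ) :
    Tendsto (fun N => ∑ j ∈ range M, c j * W ε N (j:ℤ)) atTop (𝓝 0) := by
  have : Tendsto (fun N => ∑ j ∈ range M, c j * W ε N (j:ℤ)) atTop
      (𝓝 (∑ j ∈ range M, c j * 0)) := by
    apply tendsto_finset_sum
    intro j _
    exact (tendsto_Wj h1 h2 j).const_mul (c j)
  simpa using this

lemma WS_gg (h1 : -1 < ε) (h2 : ε < 1) {N : ℕ} (hN : 1 ≤ N) :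
    WS ε (fun j => gg ε j) N = 1/2 := by
  rw [WS_telescope hN _ (fun i hi => harmonic_gg h1 h2 hi), gg_zero, gg_one]
  ring

lemma tail_bound (h1 : -1 < ε) (h2 : ε < 1) {M N : ℕ} (hM : 1 ≤ M) (hN : 1 ≤ N)
    (hMN : M ≤ N+1) :
    ∑ j ∈ Ico M (N+1), W ε N (j:ℤ) ≤ 1/(2 * gg ε M) := by
  have hgpos : (0:ℝ) < gg ε M := lt_of_lt_of_le one_pos (one_le_gg h1 h2 hM)
  rw [le_div_iff₀ (by positivity)]
  have key : gg ε M * ∑ j ∈ Ico M (N+1), W ε N (j:ℤ) ≤ WS ε (fun j => gg ε j) N := by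
    rw [Finset.mul_sum]
    calc ∑ j ∈ Ico M (N+1), gg ε M * W ε N (j:ℤ)
        ≤ ∑ j ∈ Ico M (N+1), gg ε j * W ε N (j:ℤ) := by
          apply Finset.sum_le_sum
          intro j hj
          exact mul_le_mul_of_nonneg_right (gg_mono h1 h2 (mem_Ico.1 hj).1)
            (W_nonneg h1 h2 _ _)
      _ ≤ ∑ j ∈ range (N+1), gg ε j * W ε N (j:ℤ) := by
          apply Finset.sum_le_sum_of_subset_of_nonneg
          · rw [Finset.range_eq_Ico]; exact Finset.Ico_subset_Ico (Nat.zero_le M) le_rfl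
          · intro j _ _; exact mul_nonneg (gg_nonneg h1 h2 j) (W_nonneg h1 h2 _ _)
      _ = WS ε (fun j => gg ε j) N := rfl
  rw [WS_gg h1 h2 hN] at key
  nlinarith [key]

lemma rho_lb (hge : -(1/2) ≤ ε) (h2 : ε < 1) : ∀ k : ℕ, 1/(2*(k:ℝ)+1) ≤ rho ε k := by
  intro k
  induction k with
  | zero => norm_num [rho]
  | succ k ih =>
    rw [rho]
    have hb : (0:ℝ) < (k:ℝ)+1-ε := by push_cast; linarith
    have ha : (0:ℝ) < (k:ℝ)+1+ε := by push_cast; linarith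
    have h2k : (0:ℝ) < 2*(k:ℝ)+1 := by positivity
    have h2k3 : (0:ℝ) < 2*(k:ℝ)+3 := by positivity
    have hfac : (2*(k:ℝ)+1)/(2*(k:ℝ)+3) ≤ ((k:ℝ)+1+ε)/((k:ℝ)+1-ε) := by
      rw [div_le_div_iff₀ h2k3 hb]
      nlinarith
    have hmul := mul_le_mul ih hfac (by positivity) (rho_pos (by linarith) h2 k).le
    have hval : (1/(2*(k:ℝ)+1)) * ((2*(k:ℝ)+1)/(2*(k:ℝ)+3)) = 1/(2*(k:ℝ)+3) := by
      field_simp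
    rw [show (((k+1):ℕ):ℝ) = (k:ℝ)+1 from by push_cast; ring,
      show (2*((k:ℝ)+1)+1) = 2*(k:ℝ)+3 from by ring, ← hval]
    exact hmul

lemma gg_atTop (hge : -(1/2) ≤ ε) (h2 : ε < 1) : Tendsto (gg ε) atTop atTop := by
  apply tendsto_atTop_mono _ (Tendsto.const_mul_atTop (by norm_num : (0:ℝ) < 1/2)
    Real.tendsto_sum_range_one_div_nat_succ_atTop)
  intro M
  rw [Finset.mul_sum]
  apply Finset.sum_le_sum
  intro k _
  have h2k : (0:ℝ) < 2*(k:ℝ)+1 := by positivity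
  calc 1/2 * (1/((k:ℝ)+1)) = 1/(2*(k:ℝ)+2) := by
        rw [div_mul_div_comm, one_mul]; congr 1; ring
    _ ≤ 1/(2*(k:ℝ)+1) := by
        apply one_div_le_one_div_of_le h2k
        linarith
    _ ≤ rho ε k := rho_lb hge h2 k

lemma m_tendsto_zero (h1 : -1 < ε) (h2 : ε < 1) (hge : -(1/2) ≤ ε) :
    Tendsto (fun N => WS ε (fun _ => (1:ℝ)) N) atTop (𝓝 0) := by
  rw [Metric.tendsto_atTop]
  intro δ hδ
  have hgg := gg_atTop hge h2
  obtain ⟨M₁, hM₁⟩ := (hgg.eventually_ge_atTop (1/δ + 1)).exists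
  set M := max M₁ 1 with hMdef
  have hM1 : 1 ≤ M := le_max_right _ _
  have hggM : 1/δ + 1 ≤ gg ε M := le_trans hM₁ (gg_mono h1 h2 (le_max_left _ _))
  have hδ' : (0:ℝ) < 1/δ := by positivity
  have hggpos : (0:ℝ) < gg ε M := by linarith
  have htail : 1/(2 * gg ε M) < δ/2 := by
    rw [div_lt_iff₀ (by positivity)]
    have : 1/δ * δ = 1 := by field_simp
    nlinarith [hδ, hggM]
  obtain ⟨N₁, hN₁⟩ := Metric.tendsto_atTop.1
    (tendsto_finpart h1 h2 (fun _ => (1:ℝ)) M) (δ/2) (by linarith)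
  refine ⟨max (max N₁ M) 1, fun N hN => ?_⟩
  have hNN₁ : N₁ ≤ N := le_trans (le_trans (le_max_left _ _) (le_max_left _ _)) hN
  have hN1 : 1 ≤ N := le_trans (le_max_right _ _) hN
  have hMN : M ≤ N + 1 :=
    le_trans (le_trans (le_trans (le_max_right _ _) (le_max_left _ _)) hN) (Nat.le_succ N)
  have hsplit : WS ε (fun _ => (1:ℝ)) N
      = (∑ j ∈ range M, W ε N (j:ℤ)) + ∑ j ∈ Ico M (N+1), W ε N (j:ℤ) := by
    rw [WS]
    simp only [one_mul]
    rw [Finset.range_eq_Ico, ← Finset.sum_Ico_consecutive _ (Nat.zero_le M) hMN,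
      ← Finset.range_eq_Ico]
  have hfin := hN₁ N hNN₁
  simp only [one_mul, Real.dist_eq, sub_zero] at hfin
  have hfin' : ∑ j ∈ range M, W ε N (j:ℤ) < δ/2 := lt_of_le_of_lt (le_abs_self _) hfin
  have htailN : ∑ j ∈ Ico M (N+1), W ε N (j:ℤ) ≤ 1/(2 * gg ε M) :=
    tail_bound h1 h2 hM1 hN1 hMN
  have hWSpos := WS_nonneg h1 h2 (fun _ => (1:ℝ)) (fun _ => zero_le_one) N
  rw [Real.dist_eq, sub_zero, abs_of_nonneg hWSpos, hsplit]
  linarith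

lemma sumFc_eq_m {N : ℕ} (hN : 1 ≤ N) :
    ∑ k ∈ range (N+1), Fc ε k = 1 - 2 * WS ε (fun _ => (1:ℝ)) N := by
  rw [sumFc_eq, WS_one_fun hN, gL_one]
  ring

lemma Fc_nonneg (h1 : -1 < ε) (h2 : ε < 1) : ∀ n, 0 ≤ Fc ε n := by
  intro n
  match n with
  | 0 => exact le_refl 0
  | (m+1) =>
    show (0:ℝ) ≤ (1+ε) * W ε m 1
    exact mul_nonneg (by linarith) (W_nonneg h1 h2 m 1)

lemma sumFc_le_one (h1 : -1 < ε) (h2 : ε < 1) (N : ℕ) : ∑ k ∈ range N, Fc ε k ≤ 1 := by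
  match N with
  | 0 => simp
  | (M+1) =>
    rcases Nat.eq_zero_or_pos M with h | h
    · subst h; rw [Finset.sum_range_one]; norm_num [Fc]
    · rw [sumFc_eq_m h]
      have := WS_nonneg h1 h2 (fun _ => (1:ℝ)) (fun _ => zero_le_one) M
      linarith

lemma summable_Fc (h1 : -1 < ε) (h2 : ε < 1) : Summable (Fc ε) :=
  summable_of_sum_range_le (Fc_nonneg h1 h2) (sumFc_le_one h1 h2)

lemma tendsto_sumFc_one (h1 : -1 < ε) (h2 : ε < 1) (hge : -(1/2) ≤ ε) :
    Tendsto (fun N => ∑ k ∈ range N, Fc ε k) atTop (𝓝 1) := by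
  apply (tendsto_add_atTop_iff_nat 1).1
  have hm := (m_tendsto_zero h1 h2 hge).const_mul (2:ℝ)
  have hlim : Tendsto (fun N => 1 - 2 * WS ε (fun _ => (1:ℝ)) N) atTop (𝓝 1) := by
    have h' := (tendsto_const_nhds (α := ℕ) (x := (1:ℝ))).sub hm
    simpa using h'
  apply Tendsto.congr' _ hlim
  filter_upwards [eventually_ge_atTop 1] with N hN
  exact (sumFc_eq_m hN).symm

lemma hasSum_Fc_one (h1 : -1 < ε) (h2 : ε < 1) (hge : -(1/2) ≤ ε) : HasSum (Fc ε) 1 := by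
  have hs := (summable_Fc h1 h2).hasSum
  have huniq := tendsto_nhds_unique hs.tendsto_sum_nat (tendsto_sumFc_one h1 h2 hge)
  rwa [huniq] at hs

noncomputable def cc (ε : ℝ) (k : ℕ) : ℝ := ((k:ℝ) - ε) * rho ε k

lemma cc_step (h2 : ε < 1) (k : ℕ) : cc ε k - cc ε (k+1) = (-1-2*ε) * rho ε k := by
  rw [cc, cc, rho]
  have h0 : (0:ℝ) ≤ (k:ℝ) := Nat.cast_nonneg k
  have hne : ((k:ℝ)+1-ε) ≠ 0 := by intro h; nlinarith
  push_cast
  field_simp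
  ring

lemma gg_eq_cc (h2 : ε < 1) (K : ℕ) : (-1-2*ε) * gg ε K = -ε - cc ε K := by
  rw [gg, Finset.mul_sum]
  rw [Finset.sum_congr rfl (fun k _ => (cc_step h2 k).symm), Finset.sum_range_sub']
  norm_num [cc, rho]

lemma cc_nonneg (h1 : -1 < ε) (hlt : ε < -(1/2)) (k : ℕ) : 0 ≤ cc ε k := by
  have h0 : (0:ℝ) ≤ (k:ℝ) := Nat.cast_nonneg k
  exact mul_nonneg (by linarith) (rho_pos h1 (by linarith) k).le

lemma cc_antitone (h1 : -1 < ε) (hlt : ε < -(1/2)) : Antitone (cc ε) := by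
  apply antitone_nat_of_succ_le
  intro k
  have := cc_step (by linarith : ε < 1) k
  have hβ : (0:ℝ) < -1-2*ε := by linarith
  have := rho_pos h1 (by linarith) k
  nlinarith

lemma gg_le_S (h1 : -1 < ε) (hlt : ε < -(1/2)) (K : ℕ) :
    gg ε K ≤ -ε/(-1-2*ε) := by
  have hβ : (0:ℝ) < -1-2*ε := by linarith
  have hc := cc_nonneg h1 hlt K
  have := gg_eq_cc (by linarith : ε < 1) K
  rw [le_div_iff₀ hβ]
  nlinarith

lemma summable_rho (h1 : -1 < ε) (hlt : ε < -(1/2)) : Summable (rho ε) :=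
  summable_of_sum_range_le (fun k => (rho_pos h1 (by linarith) k).le)
    (fun K => gg_le_S h1 hlt K)

lemma tendsto_cc_zero (h1 : -1 < ε) (hlt : ε < -(1/2)) :
    Tendsto (cc ε) atTop (𝓝 0) := by
  have h2 : ε < 1 := by linarith
  have hanti := cc_antitone h1 hlt
  have hbdd : BddBelow (Set.range (cc ε)) := by
    refine ⟨0, ?_⟩
    rintro x ⟨k, rfl⟩
    exact cc_nonneg h1 hlt k
  have htend := tendsto_atTop_ciInf hanti hbdd
  have hℓ0 : 0 ≤ ⨅ k, cc ε k := le_ciInf (fun k => cc_nonneg h1 hlt k)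
  rcases eq_or_lt_of_le hℓ0 with h | h
  · rwa [← h] at htend
  · exfalso
    set l := ⨅ k, cc ε k with hl
    have hlow : ∀ k : ℕ, l/((k:ℝ)+1) ≤ rho ε k := by
      intro k
      have h1k : l ≤ cc ε k := ciInf_le hbdd k
      have hk0 : (0:ℝ) ≤ (k:ℝ) := Nat.cast_nonneg k
      have hkε : (0:ℝ) < (k:ℝ) - ε := by linarith
      have hk1 : (0:ℝ) < (k:ℝ) + 1 := by linarith
      rw [div_le_iff₀ hk1]
      have hcc : cc ε k = ((k:ℝ) - ε) * rho ε k := rfl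
      have hrpos := rho_pos h1 h2 k
      nlinarith [h1k, hcc]
    have hsum : Summable (fun k : ℕ => l/((k:ℝ)+1)) :=
      Summable.of_nonneg_of_le (fun k => by positivity) hlow (summable_rho h1 hlt)
    have hsum2 : Summable (fun k : ℕ => 1/((k:ℝ)+1)) := by
      have := hsum.mul_left l⁻¹
      apply this.congr
      intro k
      field_simp
    have hsum3 : Summable (fun n : ℕ => 1/(n:ℝ)) := by
      apply (summable_nat_add_iff 1).1
      apply hsum2.congr
      intro k
      push_cast
      ring
    exact Real.not_summable_one_div_natCast hsum3

noncomputable def hT (ε : ℝ) (j : ℕ) : ℝ := -ε/(-1-2*ε) - gg ε j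

lemma hT_zero : hT ε 0 = -ε/(-1-2*ε) := by simp [hT, gg_zero]

lemma hT_one : hT ε 1 = -ε/(-1-2*ε) - 1 := by simp [hT, gg_one]

lemma harmonic_hT (h1 : -1 < ε) (h2 : ε < 1) : ∀ i : ℕ, 1 ≤ i →
    gR ε (i:ℤ) * hT ε (i+1) + gL ε (i:ℤ) * hT ε (i-1) = hT ε i := by
  intro i hi
  simp only [hT]
  linear_combination (-ε/(-1-2*ε)) * gR_add_gL (ε := ε) (i:ℤ) - harmonic_gg h1 h2 hi

lemma hT_nonneg (h1 : -1 < ε) (hlt : ε < -(1/2)) (j : ℕ) : 0 ≤ hT ε j :=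
  sub_nonneg.2 (gg_le_S h1 hlt j)

lemma hT_antitone (h1 : -1 < ε) (h2 : ε < 1) : Antitone (hT ε) := by
  intro a b hab
  simp only [hT]
  have := gg_mono h1 h2 hab
  linarith

lemma hT_eq_cc (hlt : ε < -(1/2)) (j : ℕ) : hT ε j = cc ε j / (-1-2*ε) := by
  have hβ : (0:ℝ) < -1-2*ε := by linarith
  have := gg_eq_cc (by linarith : ε < 1) j
  rw [hT, eq_div_iff (ne_of_gt hβ)]
  have hx : -ε/(-1-2*ε) * (-1-2*ε) = -ε := div_mul_cancel₀ _ (ne_of_gt hβ)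
  linear_combination hx - this

lemma tendsto_hT_zero (h1 : -1 < ε) (hlt : ε < -(1/2)) :
    Tendsto (hT ε) atTop (𝓝 0) := by
  have hc := (tendsto_cc_zero h1 hlt).div_const (-1-2*ε)
  rw [zero_div] at hc
  exact hc.congr (fun j => (hT_eq_cc hlt j).symm)

lemma WS_one_le_half (h1 : -1 < ε) (h2 : ε < 1) {N : ℕ} (hN : 1 ≤ N) :
    WS ε (fun _ => (1:ℝ)) N ≤ 1/2 := by
  rw [WS_one_fun hN, gL_one]
  have hσ : 0 ≤ ∑ n ∈ Ico 1 N, W ε n 1 :=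
    Finset.sum_nonneg (fun n _ => W_nonneg h1 h2 n 1)
  nlinarith

lemma mass_Ico_le_half (h1 : -1 < ε) (h2 : ε < 1) {M N : ℕ} (hN : 1 ≤ N) :
    ∑ j ∈ Ico M (N+1), W ε N (j:ℤ) ≤ 1/2 := by
  have hsub : Ico M (N+1) ⊆ range (N+1) := by
    rw [Finset.range_eq_Ico]; exact Finset.Ico_subset_Ico (Nat.zero_le M) le_rfl
  calc ∑ j ∈ Ico M (N+1), W ε N (j:ℤ)
      ≤ ∑ j ∈ range (N+1), W ε N (j:ℤ) :=
        Finset.sum_le_sum_of_subset_of_nonneg hsub (fun j _ _ => W_nonneg h1 h2 _ _)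
    _ = WS ε (fun _ => (1:ℝ)) N := by rw [WS]; simp [one_mul]
    _ ≤ 1/2 := WS_one_le_half h1 h2 hN

lemma WS_hT_tendsto_zero (h1 : -1 < ε) (hlt : ε < -(1/2)) :
    Tendsto (fun N => WS ε (hT ε) N) atTop (𝓝 0) := by
  have h2 : ε < 1 := by linarith
  rw [Metric.tendsto_atTop]
  intro δ hδ
  obtain ⟨M, hM⟩ := ((tendsto_hT_zero h1 hlt).eventually_lt_const hδ).exists
  obtain ⟨N₁, hN₁⟩ := Metric.tendsto_atTop.1
    (tendsto_finpart h1 h2 (hT ε) M) (δ/4) (by linarith)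
  refine ⟨max (max N₁ M) 1, fun N hN => ?_⟩
  have hNN₁ : N₁ ≤ N := le_trans (le_trans (le_max_left _ _) (le_max_left _ _)) hN
  have hN1 : 1 ≤ N := le_trans (le_max_right _ _) hN
  have hMN : M ≤ N + 1 :=
    le_trans (le_trans (le_trans (le_max_right _ _) (le_max_left _ _)) hN) (Nat.le_succ N)
  have hsplit : WS ε (hT ε) N
      = (∑ j ∈ range M, hT ε j * W ε N (j:ℤ)) + ∑ j ∈ Ico M (N+1), hT ε j * W ε N (j:ℤ) := by
    rw [WS, Finset.range_eq_Ico, ← Finset.sum_Ico_consecutive _ (Nat.zero_le M) hMN,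
      ← Finset.range_eq_Ico]
  have hfin := hN₁ N hNN₁
  simp only [Real.dist_eq, sub_zero] at hfin
  have hfin' : ∑ j ∈ range M, hT ε j * W ε N (j:ℤ) < δ/4 :=
    lt_of_le_of_lt (le_abs_self _) hfin
  have htail : ∑ j ∈ Ico M (N+1), hT ε j * W ε N (j:ℤ) ≤ hT ε M * (1/2) := by
    calc ∑ j ∈ Ico M (N+1), hT ε j * W ε N (j:ℤ)
        ≤ ∑ j ∈ Ico M (N+1), hT ε M * W ε N (j:ℤ) := by
          apply Finset.sum_le_sum
          intro j hj
          exact mul_le_mul_of_nonneg_right (hT_antitone h1 h2 (mem_Ico.1 hj).1)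
            (W_nonneg h1 h2 _ _)
      _ = hT ε M * ∑ j ∈ Ico M (N+1), W ε N (j:ℤ) := by rw [Finset.mul_sum]
      _ ≤ hT ε M * (1/2) :=
          mul_le_mul_of_nonneg_left (mass_Ico_le_half h1 h2 hN1) (hT_nonneg h1 hlt M)
  have hWSpos := WS_nonneg h1 h2 (hT ε) (hT_nonneg h1 hlt) N
  rw [Real.dist_eq, sub_zero, abs_of_nonneg hWSpos, hsplit]
  have hhTM := hT_nonneg h1 hlt M
  nlinarith [hM, hfin', htail]

lemma sumFc_eq_hT (h1 : -1 < ε) (hlt : ε < -(1/2)) {N : ℕ} (hN : 1 ≤ N) :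
    ∑ k ∈ range (N+1), Fc ε k
      = ((-ε/(-1-2*ε) - 1) - 2 * WS ε (hT ε) N) / (-ε/(-1-2*ε)) := by
  have h2 : ε < 1 := by linarith
  have hβ : (0:ℝ) < -1-2*ε := by linarith
  have hmε : (0:ℝ) < -ε := by linarith
  have hS : (0:ℝ) < -ε/(-1-2*ε) := by positivity
  have htel := WS_telescope (ε := ε) hN (hT ε) (harmonic_hT h1 h2)
  rw [hT_zero, hT_one, gL_one] at htel
  rw [sumFc_eq, eq_div_iff (ne_of_gt hS), htel]
  ring

lemma tendsto_sumFc_trans (h1 : -1 < ε) (hlt : ε < -(1/2)) :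
    Tendsto (fun N => ∑ k ∈ range N, Fc ε k) atTop (𝓝 (1/|ε| - 1)) := by
  have h2 : ε < 1 := by linarith
  have hβ : (0:ℝ) < -1-2*ε := by linarith
  have hmε : (0:ℝ) < -ε := by linarith
  have hS : (0:ℝ) < -ε/(-1-2*ε) := by positivity
  have hval : ((-ε/(-1-2*ε) - 1) - 2 * 0) / (-ε/(-1-2*ε)) = 1/|ε| - 1 := by
    have hεne : ε ≠ 0 := by intro h; rw [h] at hmε; norm_num at hmε
    rw [abs_of_neg (by linarith : ε < 0)]
    have hβne' : (-1-ε*2) ≠ 0 := by intro h; linarith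
    field_simp
    ring
  apply (tendsto_add_atTop_iff_nat 1).1
  have hlim : Tendsto (fun N => ((-ε/(-1-2*ε) - 1) - 2 * WS ε (hT ε) N) / (-ε/(-1-2*ε)))
      atTop (𝓝 (1/|ε| - 1)) := by
    rw [← hval]
    exact (((WS_hT_tendsto_zero h1 hlt).const_mul 2).const_sub _).div_const _
  apply Tendsto.congr' _ hlim
  filter_upwards [eventually_ge_atTop 1] with N hN
  exact (sumFc_eq_hT h1 hlt hN).symm

lemma hasSum_Fc_trans (h1 : -1 < ε) (hlt : ε < -(1/2)) :
    HasSum (Fc ε) (1/|ε| - 1) := by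
  have h2 : ε < 1 := by linarith
  have hs := (summable_Fc h1 h2).hasSum
  have huniq := tendsto_nhds_unique hs.tendsto_sum_nat (tendsto_sumFc_trans h1 hlt)
  rwa [huniq] at hs

end Gillis

/-- The return probability `R = Σ_{n≥1} F_n` of the Gillis walk equals `1/|ε| − 1` for
`−1 < ε < −1/2` (transience) and equals `1` for `−1/2 ≤ ε < 1` (recurrence). -/
theorem gillis_return_probability (ε : ℝ) (hε : ε ∈ Set.Ioo (-1 : ℝ) 1)
    (F : ℕ → ℝ) (hF0 : F 0 = 0)
    (hren : ∀ n : ℕ, 1 ≤ n → gP ε n 0 = ∑ k ∈ Finset.Icc 1 n, F k * gP ε (n - k) 0) :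
    (ε < -(1 / 2) → HasSum F (1 / |ε| - 1)) ∧
    (-(1 / 2) ≤ ε → HasSum F 1) := by
  obtain ⟨h1, h2⟩ := hε
  have hFfun : F = Gillis.Fc ε := funext (Gillis.F_eq_Fc hF0 hren)
  constructor
  · intro hlt
    rw [hFfun]
    exact Gillis.hasSum_Fc_trans h1 hlt
  · intro hge
    rw [hFfun]
    exact Gillis.hasSum_Fc_one h1 h2 hge
end
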